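/- arXiv:1912.01733 — 6 statements merged into one kernel-verified Lean document; each statement's English description precedes it below -/
import Mathlib

section
/- Assume the following result (Theorem 1 of Pomatto–Strack–Tamuz): for all Borel probability measures μ', ν' on ℝ with finite first moments and E[μ'] < E[ν'], there exists a Borel probability measure η' on ℝ such that μ' * η' ≤ ν' * η' in first-order stochastic dominance. Then the only map φ : P(ℝ) → ℝ that is both monotone with respect to first-order stochastic dominance and a homomorphism from (P(ℝ), *) to (ℝ, +) is the zero map φ = 0. -/
open MeasureTheory

/-- First-order stochastic dominance: `StochDom μ ν` means `μ ≤ ν`,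
i.e. `μ((-∞,x]) ≥ ν((-∞,x])` for all `x`. -/
def StochDom (μ ν : MeasureTheory.Measure ℝ) : Prop :=
  ∀ x : ℝ, ν (Set.Iic x) ≤ μ (Set.Iic x)

/-- Convolution of probability measures. -/
noncomputable def pconv (μ ν : ProbabilityMeasure ℝ) : ProbabilityMeasure ℝ :=
  ⟨(μ : MeasureTheory.Measure ℝ).conv (ν : MeasureTheory.Measure ℝ), by infer_instance⟩

/-- The point mass at `x` as a probability measure. -/
noncomputable def pdirac (x : ℝ) : ProbabilityMeasure ℝ :=
  ⟨MeasureTheory.Measure.dirac x, inferInstance⟩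

/-- First-order stochastic dominance on probability measures. -/
def PSD (μ ν : ProbabilityMeasure ℝ) : Prop :=
  StochDom (μ : MeasureTheory.Measure ℝ) (ν : MeasureTheory.Measure ℝ)

open Set Filter Topology ProbabilityTheory
open scoped ENNReal

section Aux

lemma conv_dirac' (μ : Measure ℝ) [SFinite μ] (a : ℝ) :
    μ.conv (Measure.dirac a) = μ.map (· + a) := by
  unfold Measure.conv
  rw [Measure.prod_dirac, Measure.map_map (by fun_prop) (by fun_prop)]
  rfl

lemma pdirac_conv (a b : ℝ) : pconv (pdirac a) (pdirac b) = pdirac (a + b) := by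
  apply Subtype.ext
  show (Measure.dirac a).conv (Measure.dirac b) = Measure.dirac (a + b)
  rw [conv_dirac', Measure.map_dirac' (by fun_prop)]

lemma pconv_dirac_Iic (μ : ProbabilityMeasure ℝ) (a x : ℝ) :
    (pconv μ (pdirac a) : Measure ℝ) (Iic x) = (μ : Measure ℝ) (Iic (x - a)) := by
  show ((μ : Measure ℝ).conv (Measure.dirac a)) (Iic x) = _
  rw [conv_dirac', Measure.map_apply (by fun_prop) measurableSet_Iic]
  congr 1
  ext y
  simp [Set.mem_Iic, le_sub_iff_add_le]

lemma cdf_pconv_dirac (μ : ProbabilityMeasure ℝ) (a x : ℝ) :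
    cdf (pconv μ (pdirac a) : Measure ℝ) x = cdf (μ : Measure ℝ) (x - a) := by
  rw [cdf_eq_real, cdf_eq_real, measureReal_def, measureReal_def, pconv_dirac_Iic]

lemma integrable_id_dirac (a : ℝ) : Integrable (fun x : ℝ => x) (Measure.dirac a) := by
  constructor
  · exact aestronglyMeasurable_id
  · simp [HasFiniteIntegral, lintegral_dirac]

lemma psd_pdirac {a b : ℝ} (hab : a ≤ b) : PSD (pdirac a) (pdirac b) := by
  intro x
  show Measure.dirac b (Iic x) ≤ Measure.dirac a (Iic x)
  rw [Measure.dirac_apply, Measure.dirac_apply]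
  by_cases hb : b ≤ x
  · have ha : a ≤ x := hab.trans hb
    simp [Set.indicator_apply, Set.mem_Iic, ha, hb]
  · simp [Set.indicator_apply, Set.mem_Iic, hb]

/-- A single probability measure dominating (in FOSD) a sequence of probability
measures whose right tails beyond `0` are summably small. -/
lemma lemL (κ : ℕ → ProbabilityMeasure ℝ)
    (h : ∀ n, 1 - (2:ℝ)⁻¹ ^ n ≤ cdf (κ n : Measure ℝ) 0) :
    ∃ τ : ProbabilityMeasure ℝ, ∀ n, PSD (κ n) τ := by
  set Fn : ℕ → StieltjesFunction ℝ := fun n => cdf (κ n : Measure ℝ) with hFn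
  set F : ℝ → ℝ := fun x => ⨅ n, Fn n x with hF
  have hbdd : ∀ x : ℝ, BddBelow (Set.range fun n => Fn n x) := by
    intro x
    refine ⟨0, ?_⟩
    rintro y ⟨n, rfl⟩
    exact cdf_nonneg _ x
  have hFle : ∀ n x, F x ≤ Fn n x := fun n x => ciInf_le (hbdd x) n
  have hFge0 : ∀ x, 0 ≤ F x := fun x => le_ciInf fun n => cdf_nonneg _ x
  have hmono : Monotone F := by
    intro x y hxy
    exact le_ciInf fun n => (hFle n x).trans ((Fn n).mono hxy)
  have hrc : ∀ x, ContinuousWithinAt F (Ici x) x := by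
    intro x
    refine tendsto_order.2 ⟨?_, ?_⟩
    · intro a ha
      filter_upwards [eventually_mem_nhdsWithin] with y hy
      exact lt_of_lt_of_le ha (hmono hy)
    · intro b hb
      obtain ⟨m, hm⟩ := exists_lt_of_ciInf_lt hb
      filter_upwards [((Fn m).right_continuous x).eventually_lt_const hm] with y hy
      exact lt_of_le_of_lt (hFle m y) hy
  have hbot : Tendsto F atBot (𝓝 0) :=
    tendsto_of_tendsto_of_tendsto_of_le_of_le tendsto_const_nhds
      (tendsto_cdf_atBot (κ 0 : Measure ℝ)) hFge0 (hFle 0)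
  have key : ∀ ε : ℝ, 0 < ε → ∀ᶠ x : ℝ in atTop, 1 - ε ≤ F x := by
    intro ε hε
    obtain ⟨N, hN⟩ : ∃ N : ℕ, (2:ℝ)⁻¹ ^ N < ε := exists_pow_lt_of_lt_one hε (by norm_num)
    have h1 : ∀ᶠ x : ℝ in atTop, ∀ n ∈ Finset.range N, 1 - ε ≤ Fn n x := by
      rw [Filter.eventually_all_finset]
      intro n _
      exact Filter.Tendsto.eventually_const_le (by linarith) (tendsto_cdf_atTop _)
    filter_upwards [h1, eventually_ge_atTop (0:ℝ)] with x hx hx0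
    refine le_ciInf fun n => ?_
    rcases lt_or_ge n N with hn | hn
    · exact hx n (Finset.mem_range.2 hn)
    · have h2 : (2:ℝ)⁻¹ ^ n ≤ (2:ℝ)⁻¹ ^ N :=
        pow_le_pow_of_le_one (by norm_num) (by norm_num) hn
      have h3 : 1 - ε ≤ 1 - (2:ℝ)⁻¹ ^ n := by linarith
      exact h3.trans ((h n).trans ((Fn n).mono hx0))
  have htop : Tendsto F atTop (𝓝 1) := by
    refine tendsto_order.2 ⟨?_, ?_⟩
    · intro a ha
      filter_upwards [key ((1 - a)/2) (by linarith)] with x hx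
      linarith
    · intro b hb
      filter_upwards [] with x
      exact lt_of_le_of_lt ((hFle 0 x).trans (cdf_le_one _ x)) hb
  set G : StieltjesFunction ℝ := ⟨F, hmono, hrc⟩ with hG
  have hprob : IsProbabilityMeasure G.measure := G.isProbabilityMeasure hbot htop
  refine ⟨⟨G.measure, hprob⟩, fun n x => ?_⟩
  show G.measure (Iic x) ≤ (κ n : Measure ℝ) (Iic x)
  rw [G.measure_Iic hbot, sub_zero, ← ofReal_cdf]
  exact ENNReal.ofReal_le_ofReal (hFle n x)

/-- A single probability measure dominated (in FOSD) by a sequence of probability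
measures whose left tails beyond `0` are summably small. -/
lemma lemL' (κ : ℕ → ProbabilityMeasure ℝ)
    (h : ∀ n, cdf (κ n : Measure ℝ) 0 ≤ (2:ℝ)⁻¹ ^ n) :
    ∃ τ : ProbabilityMeasure ℝ, ∀ n, PSD τ (κ n) := by
  set Fn : ℕ → StieltjesFunction ℝ := fun n => cdf (κ n : Measure ℝ) with hFn
  set S : ℝ → ℝ := fun x => ⨆ n, Fn n x with hS
  have hbdd : ∀ x : ℝ, BddAbove (Set.range fun n => Fn n x) := by
    intro x
    refine ⟨1, ?_⟩
    rintro y ⟨n, rfl⟩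
    exact cdf_le_one _ x
  have hSge : ∀ n x, Fn n x ≤ S x := fun n x => le_ciSup (hbdd x) n
  have hSle1 : ∀ x, S x ≤ 1 := fun x => ciSup_le fun n => cdf_le_one _ x
  have hSge0 : ∀ x, 0 ≤ S x := fun x => (cdf_nonneg _ x).trans (hSge 0 x)
  have hSmono : Monotone S := by
    intro x y hxy
    exact ciSup_le fun n => ((Fn n).mono hxy).trans (hSge n y)
  set F : ℝ → ℝ := fun x => ⨅ y : Ioi x, S y with hF
  have hne : ∀ x : ℝ, Nonempty (Ioi x) := fun x => ⟨⟨x + 1, by simp⟩⟩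
  have hFbdd : ∀ x : ℝ, BddBelow (Set.range fun y : Ioi x => S (y:ℝ)) := by
    intro x
    refine ⟨0, ?_⟩
    rintro v ⟨y, rfl⟩
    exact hSge0 _
  have hFgeS : ∀ x, S x ≤ F x := by
    intro x
    exact le_ciInf fun y => hSmono (le_of_lt y.2)
  have hFleS : ∀ x y, x < y → F x ≤ S y := by
    intro x y hxy
    exact ciInf_le (hFbdd x) ⟨y, hxy⟩
  have hmono : Monotone F := by
    intro x y hxy
    exact le_ciInf fun z => hFleS x z (lt_of_le_of_lt hxy z.2)
  have hrc : ∀ x, ContinuousWithinAt F (Ici x) x := by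
    intro x
    refine tendsto_order.2 ⟨?_, ?_⟩
    · intro a ha
      filter_upwards [eventually_mem_nhdsWithin] with y hy
      exact lt_of_lt_of_le ha (hmono hy)
    · intro b hb
      haveI := hne x
      obtain ⟨⟨y, hy⟩, hm⟩ := exists_lt_of_ciInf_lt hb
      have hmem : ∀ᶠ z in 𝓝[Ici x] x, z < y :=
        mem_nhdsWithin_of_mem_nhds (Iio_mem_nhds hy)
      filter_upwards [hmem] with z hz
      exact lt_of_le_of_lt (hFleS z y hz) hm
  have hF0 : ∀ x, 0 ≤ F x := fun x => (hSge0 x).trans (hFgeS x)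
  have hF1 : ∀ x, F x ≤ 1 := fun x => (hFleS x (x+1) (by linarith)).trans (hSle1 _)
  have keyS : ∀ ε : ℝ, 0 < ε → ∀ᶠ x : ℝ in atBot, S x ≤ ε := by
    intro ε hε
    obtain ⟨N, hN⟩ : ∃ N : ℕ, (2:ℝ)⁻¹ ^ N < ε := exists_pow_lt_of_lt_one hε (by norm_num)
    have h1 : ∀ᶠ x : ℝ in atBot, ∀ n ∈ Finset.range N, Fn n x ≤ ε := by
      rw [Filter.eventually_all_finset]
      intro n _
      exact Filter.Tendsto.eventually_le_const hε (tendsto_cdf_atBot _)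
    filter_upwards [h1, eventually_le_atBot (0:ℝ)] with x hx hx0
    refine ciSup_le fun n => ?_
    rcases lt_or_ge n N with hn | hn
    · exact hx n (Finset.mem_range.2 hn)
    · have h2 : (2:ℝ)⁻¹ ^ n ≤ (2:ℝ)⁻¹ ^ N :=
        pow_le_pow_of_le_one (by norm_num) (by norm_num) hn
      exact ((Fn n).mono hx0).trans ((h n).trans (by linarith))
  have hbot : Tendsto F atBot (𝓝 0) := by
    refine tendsto_order.2 ⟨?_, ?_⟩
    · intro a ha
      filter_upwards [] with x
      exact lt_of_lt_of_le ha (hF0 x)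
    · intro b hb
      have h1 : ∀ᶠ x : ℝ in atBot, S x ≤ b / 2 := keyS (b/2) (by linarith)
      have h2 : ∀ᶠ x : ℝ in atBot, S (x + 1) ≤ b / 2 := by
        have := (tendsto_atBot_add_const_right atBot (1:ℝ) tendsto_id).eventually h1
        simpa using this
      filter_upwards [h2] with x hx
      exact lt_of_le_of_lt ((hFleS x (x+1) (by linarith)).trans hx) (by linarith)
  have htop : Tendsto F atTop (𝓝 1) :=
    tendsto_of_tendsto_of_tendsto_of_le_of_le (tendsto_cdf_atTop (κ 0 : Measure ℝ))
      tendsto_const_nhds (fun x => (hSge 0 x).trans (hFgeS x)) hF1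
  set G : StieltjesFunction ℝ := ⟨F, hmono, hrc⟩ with hG
  have hprob : IsProbabilityMeasure G.measure := G.isProbabilityMeasure hbot htop
  refine ⟨⟨G.measure, hprob⟩, fun n x => ?_⟩
  show (κ n : Measure ℝ) (Iic x) ≤ G.measure (Iic x)
  rw [G.measure_Iic hbot, sub_zero, ← ofReal_cdf]
  exact ENNReal.ofReal_le_ofReal ((hSge n x).trans (hFgeS x))

/-- Iterated convolution power: `ppow σ n = σ^{*(n+1)}`. -/
noncomputable def ppow (σ : ProbabilityMeasure ℝ) : ℕ → ProbabilityMeasure ℝ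
  | 0 => σ
  | n + 1 => pconv (ppow σ n) σ

end Aux

theorem no_monotone_homomorphism
    (PST : ∀ μ' ν' : ProbabilityMeasure ℝ,
      Integrable (fun x : ℝ => x) (μ' : Measure ℝ) →
      Integrable (fun x : ℝ => x) (ν' : Measure ℝ) →
      (∫ x, x ∂(μ' : Measure ℝ)) < (∫ x, x ∂(ν' : Measure ℝ)) →
      ∃ η' : ProbabilityMeasure ℝ, PSD (pconv μ' η') (pconv ν' η'))
    (φ : ProbabilityMeasure ℝ → ℝ)
    (mono : ∀ μ ν : ProbabilityMeasure ℝ, PSD μ ν → φ μ ≤ φ ν)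
    (hom : ∀ μ ν : ProbabilityMeasure ℝ, φ (pconv μ ν) = φ μ + φ ν) :
    ∀ μ : ProbabilityMeasure ℝ, φ μ = 0 := by
  -- φ vanishes at the dirac at 0
  have hzero : φ (pdirac 0) = 0 := by
    have h := hom (pdirac 0) (pdirac 0)
    rw [pdirac_conv, add_zero] at h
    linarith
  -- φ on diracs at naturals
  have fnat : ∀ k : ℕ, φ (pdirac (k:ℝ)) = (k:ℝ) * φ (pdirac 1) := by
    intro k
    induction k with
    | zero => simpa using hzero
    | succ k ih =>
      have h : φ (pdirac ((k:ℝ) + 1)) = φ (pdirac (k:ℝ)) + φ (pdirac 1) := by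
        rw [← pdirac_conv, hom]
      push_cast
      rw [h, ih]
      ring
  -- the mixture measures ρ n with small right tail and large mean
  set p : ℕ → ℝ≥0∞ := fun n => (2:ℝ≥0∞)⁻¹ ^ (n+1) with hp
  have hple : ∀ n, p n ≤ 1 := fun n => pow_le_one' (ENNReal.inv_le_one.2 one_le_two) _
  have hpne : ∀ n, p n ≠ ⊤ := fun n => ((hple n).trans_lt ENNReal.one_lt_top).ne
  have hqne : ∀ n, (1 : ℝ≥0∞) - p n ≠ ⊤ :=
    fun n => (tsub_le_self.trans_lt ENNReal.one_lt_top).ne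
  have hptoReal : ∀ n, (p n).toReal = (2:ℝ)⁻¹ ^ (n+1) := by
    intro n
    rw [hp]
    simp [ENNReal.toReal_pow]
  set b : ℕ → ℝ := fun n => ((n:ℝ) + 2) * 2 ^ (n+1) with hb
  have hρprob : ∀ n, IsProbabilityMeasure
      ((1 - p n) • Measure.dirac (0:ℝ) + p n • Measure.dirac (b n)) := by
    intro n
    constructor
    rw [Measure.add_apply, Measure.smul_apply, Measure.smul_apply]
    simp only [measure_univ, smul_eq_mul, mul_one]
    exact tsub_add_cancel_of_le (hple n)
  set ρ : ℕ → ProbabilityMeasure ℝ := fun n => ⟨_, hρprob n⟩ with hρ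
  have hint : ∀ n, Integrable (fun x : ℝ => x) (ρ n : Measure ℝ) := by
    intro n
    apply Integrable.add_measure
    · exact (integrable_id_dirac 0).smul_measure (hqne n)
    · exact (integrable_id_dirac (b n)).smul_measure (hpne n)
  have hmean : ∀ n, ∫ x, x ∂(ρ n : Measure ℝ) = (n:ℝ) + 2 := by
    intro n
    show ∫ x, x ∂((1 - p n) • Measure.dirac (0:ℝ) + p n • Measure.dirac (b n)) = _
    rw [integral_add_measure ((integrable_id_dirac 0).smul_measure (hqne n))
      ((integrable_id_dirac (b n)).smul_measure (hpne n)),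
      integral_smul_measure, integral_smul_measure, integral_dirac, integral_dirac]
    simp only [smul_eq_mul, mul_zero, zero_add, hptoReal n]
    show (2:ℝ)⁻¹ ^ (n+1) * (((n:ℝ) + 2) * 2 ^ (n+1)) = _
    have h2 : (2:ℝ)⁻¹ ^ (n+1) * 2 ^ (n+1) = 1 := by
      rw [← mul_pow]
      norm_num
    rw [mul_comm ((n:ℝ) + 2), ← mul_assoc, h2, one_mul]
  have hρcdf : ∀ n, 1 - (2:ℝ)⁻¹ ^ n ≤ cdf (ρ n : Measure ℝ) 0 := by
    intro n
    rw [cdf_eq_real, measureReal_def]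
    have hbpos : ¬ (b n ≤ 0) := by
      push_neg
      rw [hb]
      positivity
    have hIic : (ρ n : Measure ℝ) (Set.Iic 0) = 1 - p n := by
      show ((1 - p n) • Measure.dirac (0:ℝ) + p n • Measure.dirac (b n)) (Set.Iic 0) = _
      rw [Measure.add_apply, Measure.smul_apply, Measure.smul_apply,
        Measure.dirac_apply, Measure.dirac_apply]
      simp [Set.indicator_apply, Set.mem_Iic, hbpos]
    rw [hIic, ENNReal.toReal_sub_of_le (hple n) ENNReal.one_ne_top]
    simp only [ENNReal.toReal_one, hptoReal n]
    have : (2:ℝ)⁻¹ ^ (n+1) ≤ (2:ℝ)⁻¹ ^ n :=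
      pow_le_pow_of_le_one (by norm_num) (by norm_num) (Nat.le_succ n)
    linarith
  -- a measure dominating all the ρ n
  obtain ⟨τ₁, hτ₁⟩ := lemL ρ hρcdf
  -- integral over pdirac
  have hdint : ∀ a : ℝ, Integrable (fun x : ℝ => x) (pdirac a : Measure ℝ) :=
    fun a => integrable_id_dirac a
  have hdmean : ∀ a : ℝ, ∫ x, x ∂(pdirac a : Measure ℝ) = a := by
    intro a
    show ∫ x, x ∂(Measure.dirac a) = a
    rw [integral_dirac]
  -- φ (pdirac 1) ≤ 0 via PST
  have hc_le : φ (pdirac 1) ≤ 0 := by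
    by_contra hc
    push_neg at hc
    obtain ⟨m, hm⟩ := exists_nat_gt (φ τ₁ / φ (pdirac 1))
    have hkey : (m:ℝ) * φ (pdirac 1) ≤ φ τ₁ := by
      obtain ⟨η, hη⟩ := PST (pdirac (m:ℝ)) (ρ m) (hdint m) (hint m) (by
        rw [hdmean, hmean]
        linarith)
      have h1 := mono _ _ hη
      rw [hom, hom] at h1
      have h2 : φ (pdirac (m:ℝ)) ≤ φ (ρ m) := by linarith
      calc (m:ℝ) * φ (pdirac 1) = φ (pdirac (m:ℝ)) := (fnat m).symm
        _ ≤ φ (ρ m) := h2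
        _ ≤ φ τ₁ := mono _ _ (hτ₁ m)
    rw [div_lt_iff₀ hc] at hm
    linarith
  have hc_ge : 0 ≤ φ (pdirac 1) := by
    have := mono _ _ (psd_pdirac (zero_le_one (α := ℝ)))
    linarith
  have hc : φ (pdirac 1) = 0 := le_antisymm hc_le hc_ge
  have fk0 : ∀ k : ℕ, φ (pdirac (k:ℝ)) = 0 := by
    intro k
    rw [fnat k, hc, mul_zero]
  have fnegk0 : ∀ k : ℕ, φ (pdirac (-(k:ℝ))) = 0 := by
    intro k
    have h := hom (pdirac (k:ℝ)) (pdirac (-(k:ℝ)))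
    rw [pdirac_conv, add_neg_cancel] at h
    rw [hzero, fk0 k] at h
    linarith
  -- main argument for arbitrary μ
  intro σ
  have hppow : ∀ n : ℕ, φ (ppow σ n) = ((n:ℝ) + 1) * φ σ := by
    intro n
    induction n with
    | zero => show φ σ = _ ; push_cast ; ring
    | succ n ih =>
      show φ (pconv (ppow σ n) σ) = _
      rw [hom, ih]
      push_cast
      ring
  -- upper bound: φ σ ≤ 0
  have hupper : φ σ ≤ 0 := by
    have hch : ∀ n : ℕ, ∃ k : ℕ, 1 - (2:ℝ)⁻¹ ^ n ≤ cdf (ppow σ n : Measure ℝ) (k:ℝ) := by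
      intro n
      have hlt : 1 - (2:ℝ)⁻¹ ^ n < 1 := by
        have : (0:ℝ) < (2:ℝ)⁻¹ ^ n := by positivity
        linarith
      have hev := Filter.Tendsto.eventually_const_le hlt
        (tendsto_cdf_atTop (ppow σ n : Measure ℝ))
      obtain ⟨x, hx⟩ := hev.exists
      obtain ⟨k, hk⟩ := exists_nat_ge x
      exact ⟨k, hx.trans ((cdf _).mono hk)⟩
    choose r hr using hch
    set κ : ℕ → ProbabilityMeasure ℝ :=
      fun n => pconv (ppow σ n) (pdirac (-(r n : ℝ))) with hκ
    have hκcdf : ∀ n, 1 - (2:ℝ)⁻¹ ^ n ≤ cdf (κ n : Measure ℝ) 0 := by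
      intro n
      rw [hκ]
      rw [cdf_pconv_dirac]
      simpa using hr n
    obtain ⟨τ, hτ⟩ := lemL κ hκcdf
    have hbound : ∀ n : ℕ, ((n:ℝ) + 1) * φ σ ≤ φ τ := by
      intro n
      have h1 := mono _ _ (hτ n)
      rw [hκ] at h1
      simp only [hom, hppow n, fnegk0 (r n)] at h1
      linarith
    by_contra hpos
    push_neg at hpos
    obtain ⟨m, hm⟩ := exists_nat_gt (φ τ / φ σ)
    have hlt : φ τ < ((m:ℝ) + 1) * φ σ := by
      rw [div_lt_iff₀ hpos] at hm
      nlinarith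
    linarith [hbound m]
  -- lower bound: 0 ≤ φ σ
  have hlower : 0 ≤ φ σ := by
    have hch : ∀ n : ℕ, ∃ k : ℕ, cdf (ppow σ n : Measure ℝ) (-(k:ℝ)) ≤ (2:ℝ)⁻¹ ^ n := by
      intro n
      have hlt : (0:ℝ) < (2:ℝ)⁻¹ ^ n := by positivity
      have hev := Filter.Tendsto.eventually_le_const hlt
        (tendsto_cdf_atBot (ppow σ n : Measure ℝ))
      obtain ⟨x, hx⟩ := hev.exists
      obtain ⟨k, hk⟩ := exists_nat_ge (-x)
      refine ⟨k, le_trans ((cdf _).mono ?_) hx⟩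
      linarith
    choose r hr using hch
    set κ : ℕ → ProbabilityMeasure ℝ :=
      fun n => pconv (ppow σ n) (pdirac (r n : ℝ)) with hκ
    have hκcdf : ∀ n, cdf (κ n : Measure ℝ) 0 ≤ (2:ℝ)⁻¹ ^ n := by
      intro n
      rw [hκ]
      rw [cdf_pconv_dirac]
      simpa using hr n
    obtain ⟨τ, hτ⟩ := lemL' κ hκcdf
    have hbound : ∀ n : ℕ, φ τ ≤ ((n:ℝ) + 1) * φ σ := by
      intro n
      have h1 := mono _ _ (hτ n)
      rw [hκ] at h1
      simp only [hom, hppow n, fk0 (r n)] at h1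
      linarith
    by_contra hneg
    push_neg at hneg
    obtain ⟨m, hm⟩ := exists_nat_gt (φ τ / φ σ - 1)
    have hlt : ((m:ℝ) + 1) * φ σ < φ τ := by
      have hm' : φ τ / φ σ < (m:ℝ) + 1 := by linarith
      rw [div_lt_iff_of_neg hneg] at hm'
      nlinarith
    linarith [hbound m]
  linarith
end

section
/- Let φ : P(ℝ) → ℝ be translation invariant and monotone with respect to first-order stochastic dominance. Then φ is bounded, i.e., there exists C such that |φ(μ)| ≤ C for all μ ∈ P(ℝ). -/
open MeasureTheory

open scoped ENNReal

section Aux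

noncomputable def acSeq (q : ℕ → ℕ → ℝ) : ℕ → ℝ × ℝ := fun n =>
  let a : ℝ := n + ∑ k : Fin n, max 0 (q k n + (acSeq q k).2)
  (a, -(∑ N : Fin n, max 0 (q n N - (acSeq q N).1)) - max 0 (q n n - a))
decreasing_by exacts [k.isLt, N.isLt]

lemma acSeq_fst (q : ℕ → ℕ → ℝ) (n : ℕ) :
    (acSeq q n).1 = n + ∑ k : Fin n, max 0 (q k n + (acSeq q k).2) := by
  rw [acSeq]

lemma acSeq_snd (q : ℕ → ℕ → ℝ) (n : ℕ) :
    (acSeq q n).2 = -(∑ N : Fin n, max 0 (q n N - (acSeq q N).1)) -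
      max 0 (q n n - (acSeq q n).1) := by
  conv_lhs => rw [acSeq]
  rw [acSeq_fst]

lemma acSeq_ge (q : ℕ → ℕ → ℝ) (n : ℕ) : (n : ℝ) ≤ (acSeq q n).1 := by
  rw [acSeq_fst]
  have : (0:ℝ) ≤ ∑ k : Fin n, max 0 (q k n + (acSeq q k).2) :=
    Finset.sum_nonneg fun k _ => le_max_left _ _
  linarith

lemma acSeq_key (q : ℕ → ℕ → ℝ) (k N : ℕ) :
    q k N + (acSeq q k).2 ≤ (acSeq q N).1 := by
  rcases lt_or_ge k N with h | h
  · rw [acSeq_fst q N]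
    have h1 : max 0 (q k N + (acSeq q k).2) ≤ ∑ j : Fin N, max 0 (q j N + (acSeq q j).2) := by
      have := Finset.single_le_sum (f := fun j : Fin N => max 0 (q j N + (acSeq q j).2))
        (fun j _ => le_max_left _ _) (Finset.mem_univ ⟨k, h⟩)
      simpa using this
    have h2 : q k N + (acSeq q k).2 ≤ max 0 (q k N + (acSeq q k).2) := le_max_right _ _
    have h3 : (0:ℝ) ≤ N := Nat.cast_nonneg N
    linarith
  · have hsnd := acSeq_snd q k
    have hs0 : (0:ℝ) ≤ ∑ M : Fin k, max 0 (q k M - (acSeq q M).1) :=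
      Finset.sum_nonneg fun j _ => le_max_left _ _
    rcases eq_or_lt_of_le h with heq | hlt
    · subst heq
      have h2 : q N N - (acSeq q N).1 ≤ max 0 (q N N - (acSeq q N).1) := le_max_right _ _
      linarith
    · have h1 : max 0 (q k N - (acSeq q N).1) ≤ ∑ M : Fin k, max 0 (q k M - (acSeq q M).1) := by
        have := Finset.single_le_sum (f := fun M : Fin k => max 0 (q k M - (acSeq q M).1))
          (fun j _ => le_max_left _ _) (Finset.mem_univ ⟨N, hlt⟩)
        simpa using this
      have h2 : q k N - (acSeq q N).1 ≤ max 0 (q k N - (acSeq q N).1) := le_max_right _ _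
      have h4 : (0:ℝ) ≤ max 0 (q k k - (acSeq q k).1) := le_max_left _ _
      linarith

lemma conv_dirac_eq (μ : Measure ℝ) [SFinite μ] (c : ℝ) :
    μ.conv (Measure.dirac c) = μ.map (· + c) := by
  rw [Measure.conv, Measure.prod_dirac, Measure.map_map (by fun_prop) (by fun_prop)]
  rfl

lemma conv_dirac_apply (μ : Measure ℝ) [SFinite μ] (c t : ℝ) :
    μ.conv (Measure.dirac c) (Set.Iic t) = μ (Set.Iic (t - c)) := by
  rw [conv_dirac_eq, Measure.map_apply (by fun_prop) measurableSet_Iic]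
  congr 1
  ext x
  simp [le_sub_iff_add_le]

lemma geom_partial (N : ℕ) :
    (∑ n ∈ Finset.range (N+1), ((2:ℝ≥0∞)⁻¹)^(n+1)) + ((2:ℝ≥0∞)⁻¹)^(N+1) = 1 := by
  induction N with
  | zero =>
    simp [pow_one]
    rw [← one_div, ENNReal.add_halves]
  | succ N ih =>
    rw [Finset.sum_range_succ, add_assoc]
    rw [show ((2:ℝ≥0∞)⁻¹)^(N+1+1) + ((2:ℝ≥0∞)⁻¹)^(N+1+1) = ((2:ℝ≥0∞)⁻¹)^(N+1) by
      rw [← two_mul, pow_succ, mul_comm, mul_assoc, ← one_div, ENNReal.div_mul_cancel] <;> simp]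
    exact ih

lemma tsum_geom : (∑' n : ℕ, ((2:ℝ≥0∞)⁻¹)^(n+1)) = 1 := by
  simp_rw [pow_succ']
  rw [ENNReal.tsum_mul_left, ENNReal.tsum_geometric]
  rw [ENNReal.one_sub_inv_two, inv_inv]
  rw [ENNReal.inv_mul_cancel] <;> simp

noncomputable def negP (μ : ProbabilityMeasure ℝ) : ProbabilityMeasure ℝ :=
  ⟨(μ : Measure ℝ).map Neg.neg, Measure.isProbabilityMeasure_map measurable_neg.aemeasurable⟩

lemma negP_negP (μ : ProbabilityMeasure ℝ) : negP (negP μ) = μ := by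
  apply Subtype.ext
  show ((μ : Measure ℝ).map Neg.neg).map Neg.neg = (μ : Measure ℝ)
  rw [Measure.map_map measurable_neg measurable_neg]
  simp [Function.comp_def]

lemma Iio_measure_le {μ ν : ProbabilityMeasure ℝ} (h : PSD μ ν) (a : ℝ) :
    (ν : Measure ℝ) (Set.Iio a) ≤ (μ : Measure ℝ) (Set.Iio a) := by
  have hU : Set.Iio a = ⋃ n : ℕ, Set.Iic (a - ((n:ℝ)+1)⁻¹) := by
    ext y
    simp only [Set.mem_Iio, Set.mem_iUnion, Set.mem_Iic]
    constructor
    · intro hy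
      obtain ⟨n, hn⟩ := exists_nat_one_div_lt (sub_pos.2 hy)
      exact ⟨n, by rw [one_div] at hn; linarith⟩
    · rintro ⟨n, hn⟩
      have : (0:ℝ) < ((n:ℝ)+1)⁻¹ := by positivity
      linarith
  have hmono : Monotone fun n : ℕ => Set.Iic (a - ((n:ℝ)+1)⁻¹) := by
    intro m n hmn
    apply Set.Iic_subset_Iic.2
    have : ((n:ℝ)+1)⁻¹ ≤ ((m:ℝ)+1)⁻¹ := by
      have : ((m:ℝ)) ≤ (n:ℝ) := Nat.cast_le.2 hmn
      apply inv_anti₀ (by positivity)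
      linarith
    linarith
  rw [hU, hmono.directed_le.measure_iUnion, hmono.directed_le.measure_iUnion]
  exact iSup_mono fun n => h _

lemma PSD_negP {μ ν : ProbabilityMeasure ℝ} (h : PSD μ ν) : PSD (negP ν) (negP μ) := by
  intro x
  show ((μ : Measure ℝ).map Neg.neg) (Set.Iic x) ≤ ((ν : Measure ℝ).map Neg.neg) (Set.Iic x)
  rw [Measure.map_apply measurable_neg measurableSet_Iic,
      Measure.map_apply measurable_neg measurableSet_Iic]
  have hpre : (Neg.neg ⁻¹' Set.Iic x : Set ℝ) = Set.Ici (-x) := by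
    ext y; simp [neg_le]
  rw [hpre]
  have h1 : ∀ (ρ : ProbabilityMeasure ℝ),
      (ρ : Measure ℝ) (Set.Ici (-x)) = 1 - (ρ : Measure ℝ) (Set.Iio (-x)) := by
    intro ρ
    rw [← Set.compl_Iio, measure_compl measurableSet_Iio (measure_ne_top _ _), measure_univ]
  rw [h1 μ, h1 ν]
  exact tsub_le_tsub_left (Iio_measure_le h (-x)) 1

lemma negP_pconv (μ : ProbabilityMeasure ℝ) (x : ℝ) :
    negP (pconv μ (pdirac x)) = pconv (negP μ) (pdirac (-x)) := by
  apply Subtype.ext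
  show ((μ : Measure ℝ).conv (Measure.dirac x)).map Neg.neg
      = ((μ : Measure ℝ).map Neg.neg).conv (Measure.dirac (-x))
  rw [conv_dirac_eq, conv_dirac_eq,
      Measure.map_map measurable_neg (by fun_prop),
      Measure.map_map (by fun_prop) measurable_neg]
  congr 1
  ext y
  simp [Function.comp]
  ring

lemma bounded_above
    (φ : ProbabilityMeasure ℝ → ℝ)
    (mono : ∀ μ ν : ProbabilityMeasure ℝ, PSD μ ν → φ μ ≤ φ ν)
    (tinv : ∀ (μ : ProbabilityMeasure ℝ) (x : ℝ), φ (pconv μ (pdirac x)) = φ μ) :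
    ∃ C : ℝ, ∀ μ : ProbabilityMeasure ℝ, φ μ ≤ C := by
  by_contra hcon
  push_neg at hcon
  choose μs hμs using fun n : ℕ => hcon n
  -- quantiles
  have hq : ∀ k N : ℕ, ∃ x : ℝ,
      1 ≤ (μs k : Measure ℝ) (Set.Iic x) + ((2:ℝ≥0∞)⁻¹)^(N+1) := by
    intro k N
    have h1 := tendsto_measure_Iic_atTop (μs k : Measure ℝ)
    rw [measure_univ] at h1
    have hp1 : ((2:ℝ≥0∞)⁻¹)^(N+1) ≤ 1 := pow_le_one' (by simp [ENNReal.inv_le_one]) _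
    have hp0 : ((2:ℝ≥0∞)⁻¹)^(N+1) ≠ 0 := by
      simp
    have hlt : (1:ℝ≥0∞) - ((2:ℝ≥0∞)⁻¹)^(N+1) < 1 :=
      ENNReal.sub_lt_self ENNReal.one_ne_top one_ne_zero hp0
    obtain ⟨x, hx⟩ := (h1.eventually (lt_mem_nhds hlt)).exists
    refine ⟨x, ?_⟩
    calc (1:ℝ≥0∞) = (1 - ((2:ℝ≥0∞)⁻¹)^(N+1)) + ((2:ℝ≥0∞)⁻¹)^(N+1) :=
          (tsub_add_cancel_of_le hp1).symm
      _ ≤ _ := add_le_add_left hx.le _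
  choose q hqf using hq
  set a : ℕ → ℝ := fun n => (acSeq q n).1 with ha
  set c : ℕ → ℝ := fun n => (acSeq q n).2 with hc
  -- the dominating measure
  set νm : Measure ℝ := Measure.sum (fun n : ℕ => ((2:ℝ≥0∞)⁻¹)^(n+1) • Measure.dirac (a n))
    with hνm
  have hνuniv : IsProbabilityMeasure νm := by
    constructor
    rw [hνm, Measure.sum_apply _ MeasurableSet.univ]
    simp [tsum_geom]
  set ν : ProbabilityMeasure ℝ := ⟨νm, hνuniv⟩ with hν
  have key : ∀ k : ℕ, PSD (pconv (μs k) (pdirac (c k))) ν := by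
    intro k t
    show νm (Set.Iic t) ≤ ((μs k : Measure ℝ).conv (Measure.dirac (c k))) (Set.Iic t)
    rw [conv_dirac_apply]
    rw [hνm, Measure.sum_apply _ measurableSet_Iic]
    simp only [Measure.smul_apply, smul_eq_mul, Measure.dirac_apply]
    by_cases hS : ∃ n : ℕ, a n ≤ t
    · obtain ⟨n₀, hn₀⟩ := hS
      classical
      set P : ℕ → Prop := fun n => a n ≤ t with hP
      have hbd : ∀ n, P n → n ≤ ⌊t⌋₊ := by
        intro n hn
        exact Nat.le_floor ((acSeq_ge q n).trans hn)
      set N := Nat.findGreatest P ⌊t⌋₊ with hN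
      have hPN : P N := Nat.findGreatest_spec (hbd n₀ hn₀) hn₀
      have hle : ∀ n, P n → n ≤ N := fun n hn => Nat.le_findGreatest (hbd n hn) hn
      have hsum : (∑' n : ℕ, ((2:ℝ≥0∞)⁻¹)^(n+1) * (Set.Iic t).indicator 1 (a n))
          ≤ ∑ n ∈ Finset.range (N+1), ((2:ℝ≥0∞)⁻¹)^(n+1) := by
        calc (∑' n : ℕ, ((2:ℝ≥0∞)⁻¹)^(n+1) * (Set.Iic t).indicator 1 (a n))
            ≤ ∑' n : ℕ, (if n ≤ N then ((2:ℝ≥0∞)⁻¹)^(n+1) else 0) := by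
              apply ENNReal.tsum_le_tsum
              intro n
              by_cases hn : a n ≤ t
              · simp [Set.indicator_of_mem, hn, hle n hn]
              · simp [Set.indicator_of_notMem, hn]
          _ = ∑ n ∈ Finset.range (N+1), (if n ≤ N then ((2:ℝ≥0∞)⁻¹)^(n+1) else 0) := by
              apply tsum_eq_sum
              intro n hn
              simp only [Finset.mem_range, Nat.lt_succ] at hn
              simp [hn]
          _ ≤ ∑ n ∈ Finset.range (N+1), ((2:ℝ≥0∞)⁻¹)^(n+1) := by
              apply Finset.sum_le_sum
              intro n _
              split <;> simp
      have hmeas : (∑ n ∈ Finset.range (N+1), ((2:ℝ≥0∞)⁻¹)^(n+1))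
          ≤ (μs k : Measure ℝ) (Set.Iic (t - c k)) := by
        have h1 := hqf k N
        have h2 : Set.Iic (q k N) ⊆ Set.Iic (t - c k) := by
          apply Set.Iic_subset_Iic.2
          have := acSeq_key q k N
          have h3 : a N ≤ t := hPN
          replace this : q k N + c k ≤ a N := this
          linarith
        have h4 := (measure_mono h2 : (μs k : Measure ℝ) (Set.Iic (q k N)) ≤ _)
        have h5 : (1:ℝ≥0∞) ≤ (μs k : Measure ℝ) (Set.Iic (t - c k)) + ((2:ℝ≥0∞)⁻¹)^(N+1) :=
          h1.trans (add_le_add_left h4 _)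
        rw [← geom_partial N] at h5
        exact ENNReal.le_of_add_le_add_right (by simp [ENNReal.pow_ne_top]) h5
      exact hsum.trans hmeas
    · push_neg at hS
      have : ∀ n : ℕ, ((2:ℝ≥0∞)⁻¹)^(n+1) * (Set.Iic t).indicator 1 (a n) = 0 := by
        intro n
        simp [Set.indicator_of_notMem, (hS n)]
      simp only [this, tsum_zero]
      exact zero_le
  have hgt : ∀ k : ℕ, (k : ℝ) < φ ν := by
    intro k
    have h1 := mono _ _ (key k)
    rw [tinv (μs k) (c k)] at h1
    exact lt_of_lt_of_le (hμs k) h1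
  obtain ⟨k, hk⟩ := exists_nat_gt (φ ν)
  exact absurd (hgt k) (not_lt.2 hk.le)

end Aux

theorem translation_invariant_monotone_is_bounded
    (φ : ProbabilityMeasure ℝ → ℝ)
    (mono : ∀ μ ν : ProbabilityMeasure ℝ, PSD μ ν → φ μ ≤ φ ν)
    (tinv : ∀ (μ : ProbabilityMeasure ℝ) (x : ℝ), φ (pconv μ (pdirac x)) = φ μ) :
    ∃ C : ℝ, ∀ μ : ProbabilityMeasure ℝ, |φ μ| ≤ C := by
  obtain ⟨C₁, h₁⟩ := bounded_above φ mono tinv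
  set ψ : ProbabilityMeasure ℝ → ℝ := fun μ => -φ (negP μ) with hψ
  have monoψ : ∀ μ ν : ProbabilityMeasure ℝ, PSD μ ν → ψ μ ≤ ψ ν := fun μ ν h =>
    neg_le_neg (mono _ _ (PSD_negP h))
  have tinvψ : ∀ (μ : ProbabilityMeasure ℝ) (x : ℝ), ψ (pconv μ (pdirac x)) = ψ μ := by
    intro μ x
    simp only [hψ, negP_pconv, tinv]
  obtain ⟨C₂, h₂⟩ := bounded_above ψ monoψ tinvψ
  refine ⟨max C₁ C₂, fun μ => abs_le.2 ⟨?_, (h₁ μ).trans (le_max_left _ _)⟩⟩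
  have := h₂ (negP μ)
  rw [hψ] at this
  simp only [negP_negP] at this
  have : -φ μ ≤ C₂ := this
  have h3 : C₂ ≤ max C₁ C₂ := le_max_right _ _
  linarith
end

section
/- Let φ : P(ℝ) → ℝ be a monotone homomorphism with φ(δ_1) = 0. Then φ(δ_x) = 0 for all x ∈ ℝ, i.e., φ is translation invariant. -/
open MeasureTheory

lemma pconv_pdirac_pdirac (x y : ℝ) : pconv (pdirac x) (pdirac y) = pdirac (x + y) := by
  apply Subtype.ext
  show (Measure.dirac x).conv (Measure.dirac y) = Measure.dirac (x + y)
  rw [Measure.conv, Measure.dirac_prod_dirac, Measure.map_dirac' measurable_add]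

lemma psd_pdirac_s10 {x y : ℝ} (h : x ≤ y) : PSD (pdirac x) (pdirac y) := by
  intro t
  show Measure.dirac y (Set.Iic t) ≤ Measure.dirac x (Set.Iic t)
  rw [Measure.dirac_apply, Measure.dirac_apply]
  by_cases hy : y ∈ Set.Iic t
  · have hx : x ∈ Set.Iic t := le_trans h hy
    simp [hx, hy]
  · simp [hy]

theorem hom_dirac_zero (φ : ProbabilityMeasure ℝ → ℝ)
    (mono : ∀ μ ν : ProbabilityMeasure ℝ, PSD μ ν → φ μ ≤ φ ν)
    (hom : ∀ μ ν : ProbabilityMeasure ℝ, φ (pconv μ ν) = φ μ + φ ν)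
    (h1 : φ (pdirac 1) = 0) :
    (∀ x : ℝ, φ (pdirac x) = 0) ∧
    (∀ (μ : ProbabilityMeasure ℝ) (x : ℝ), φ (pconv μ (pdirac x)) = φ μ) := by
  have hadd : ∀ x y : ℝ, φ (pdirac (x + y)) = φ (pdirac x) + φ (pdirac y) := by
    intro x y
    rw [← pconv_pdirac_pdirac, hom]
  set F : ℝ →+ ℝ := AddMonoidHom.mk' (fun x => φ (pdirac x)) hadd with hF
  have hFq : ∀ q : ℚ, F (q : ℝ) = 0 := by
    intro q
    have : (q : ℝ) = q • (1 : ℝ) := by simp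
    rw [this, map_rat_smul F q (1 : ℝ)]
    have : F 1 = 0 := h1
    rw [this, smul_zero]
  have hmono : ∀ {x y : ℝ}, x ≤ y → F x ≤ F y := by
    intro x y h
    exact mono _ _ (psd_pdirac_s10 h)
  have key : ∀ x : ℝ, φ (pdirac x) = 0 := by
    intro x
    obtain ⟨q, hq⟩ := exists_rat_lt x
    obtain ⟨r, hr⟩ := exists_rat_gt x
    have h1' : (0 : ℝ) ≤ F x := by
      calc (0:ℝ) = F q := (hFq q).symm
        _ ≤ F x := hmono hq.le
    have h2' : F x ≤ 0 := by
      calc F x ≤ F r := hmono hr.le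
        _ = 0 := hFq r
    exact le_antisymm h2' h1'
  refine ⟨key, fun μ x => ?_⟩
  rw [hom, key x, add_zero]
end

section
/- Let μ, ν ∈ P(ℝ) be such that μ has expectation +∞ (i.e., ∫_{-∞}^0 |x| dμ < ∞ and ∫_0^∞ x dμ = ∞) and ν has expectation -∞ (i.e., ∫_0^∞ x dν < ∞ and ∫_{-∞}^0 |x| dν = ∞). Then there is no η ∈ P(ℝ) with μ * η ≤ ν * η in first-order stochastic dominance. -/
open MeasureTheory
open scoped ENNReal

/-- Layer-cake for the negative tail. -/
lemma tail_neg_aux (ρ : Measure ℝ) [SFinite ρ] :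
    ∫⁻ u in Set.Iic (0:ℝ), ρ (Set.Iic u) = ∫⁻ x, ENNReal.ofReal (-x) ∂ρ := by
  have hset : MeasurableSet {p : ℝ × ℝ | p.2 ≤ p.1} :=
    measurableSet_le measurable_snd measurable_fst
  have hmeas : Measurable fun p : ℝ × ℝ =>
      Set.indicator {p : ℝ × ℝ | p.2 ≤ p.1} (fun _ => (1 : ℝ≥0∞)) p :=
    measurable_const.indicator hset
  calc ∫⁻ u in Set.Iic (0:ℝ), ρ (Set.Iic u)
      = ∫⁻ u in Set.Iic (0:ℝ), ∫⁻ x,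
          Set.indicator {p : ℝ × ℝ | p.2 ≤ p.1} (fun _ => (1 : ℝ≥0∞)) (u, x) ∂ρ := by
        refine lintegral_congr fun u => ?_
        rw [← lintegral_indicator_one (measurableSet_Iic (a := u))]
        refine lintegral_congr fun x => ?_
        by_cases h : x ≤ u <;> simp [Set.indicator_apply, Set.mem_Iic, h]
    _ = ∫⁻ x, ∫⁻ u in Set.Iic (0:ℝ),
          Set.indicator {p : ℝ × ℝ | p.2 ≤ p.1} (fun _ => (1 : ℝ≥0∞)) (u, x) ∂volume ∂ρ := by
        exact lintegral_lintegral_swap hmeas.aemeasurable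
    _ = ∫⁻ x, ENNReal.ofReal (-x) ∂ρ := by
        refine lintegral_congr fun x => ?_
        have : ∀ u : ℝ, Set.indicator {p : ℝ × ℝ | p.2 ≤ p.1} (fun _ => (1 : ℝ≥0∞)) (u, x)
            = Set.indicator (Set.Ici x) (fun _ => (1 : ℝ≥0∞)) u := by
          intro u; by_cases h : x ≤ u <;> simp [Set.indicator_apply, Set.mem_Ici, h]
        rw [lintegral_congr this, lintegral_indicator measurableSet_Ici,
          Measure.restrict_restrict measurableSet_Ici]
        simp [Set.Ici_inter_Iic, Real.volume_Icc, zero_sub]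

/-- Layer-cake for the positive tail. -/
lemma tail_pos_aux (ρ : Measure ℝ) [SFinite ρ] :
    ∫⁻ u in Set.Ici (0:ℝ), ρ (Set.Ioi u) = ∫⁻ x, ENNReal.ofReal x ∂ρ := by
  have hset : MeasurableSet {p : ℝ × ℝ | p.1 < p.2} :=
    measurableSet_lt measurable_fst measurable_snd
  have hmeas : Measurable fun p : ℝ × ℝ =>
      Set.indicator {p : ℝ × ℝ | p.1 < p.2} (fun _ => (1 : ℝ≥0∞)) p :=
    measurable_const.indicator hset
  calc ∫⁻ u in Set.Ici (0:ℝ), ρ (Set.Ioi u)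
      = ∫⁻ u in Set.Ici (0:ℝ), ∫⁻ x,
          Set.indicator {p : ℝ × ℝ | p.1 < p.2} (fun _ => (1 : ℝ≥0∞)) (u, x) ∂ρ := by
        refine lintegral_congr fun u => ?_
        rw [← lintegral_indicator_one (measurableSet_Ioi (a := u))]
        refine lintegral_congr fun x => ?_
        by_cases h : u < x <;> simp [Set.indicator_apply, Set.mem_Ioi, h]
    _ = ∫⁻ x, ∫⁻ u in Set.Ici (0:ℝ),
          Set.indicator {p : ℝ × ℝ | p.1 < p.2} (fun _ => (1 : ℝ≥0∞)) (u, x) ∂volume ∂ρ := by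
        exact lintegral_lintegral_swap hmeas.aemeasurable
    _ = ∫⁻ x, ENNReal.ofReal x ∂ρ := by
        refine lintegral_congr fun x => ?_
        have : ∀ u : ℝ, Set.indicator {p : ℝ × ℝ | p.1 < p.2} (fun _ => (1 : ℝ≥0∞)) (u, x)
            = Set.indicator (Set.Iio x) (fun _ => (1 : ℝ≥0∞)) u := by
          intro u; by_cases h : u < x <;> simp [Set.indicator_apply, Set.mem_Iio, h]
        rw [lintegral_congr this, lintegral_indicator measurableSet_Iio,
          Measure.restrict_restrict measurableSet_Iio]
        simp [Set.Iio_inter_Ici, Real.volume_Ico]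

theorem no_eta_of_plus_minus_infinity
    (μ ν : Measure ℝ) [IsProbabilityMeasure μ] [IsProbabilityMeasure ν]
    (hμneg : (∫⁻ x in Set.Iic (0 : ℝ), ENNReal.ofReal |x| ∂μ) < ⊤)
    (hμpos : (∫⁻ x in Set.Ici (0 : ℝ), ENNReal.ofReal x ∂μ) = ⊤)
    (hνpos : (∫⁻ x in Set.Ici (0 : ℝ), ENNReal.ofReal x ∂ν) < ⊤)
    (hνneg : (∫⁻ x in Set.Iic (0 : ℝ), ENNReal.ofReal |x| ∂ν) = ⊤) :
    ¬ ∃ η : Measure ℝ, IsProbabilityMeasure η ∧ StochDom (μ.conv η) (ν.conv η) := by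
  rintro ⟨η, hη, hdom⟩
  -- identifications of the lintegral hypotheses with tail integrals
  have habs : ∀ ρ : Measure ℝ, (∫⁻ x in Set.Iic (0 : ℝ), ENNReal.ofReal |x| ∂ρ)
      = ∫⁻ x, ENNReal.ofReal (-x) ∂ρ := by
    intro ρ
    rw [← lintegral_indicator measurableSet_Iic]
    refine lintegral_congr fun x => ?_
    rcases le_or_gt x 0 with h | h
    · rw [Set.indicator_of_mem (Set.mem_Iic.mpr h), abs_of_nonpos h]
    · rw [Set.indicator_of_notMem (by simpa using h), ENNReal.ofReal_eq_zero.mpr (by linarith)]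
  have hpos : ∀ ρ : Measure ℝ, (∫⁻ x in Set.Ici (0 : ℝ), ENNReal.ofReal x ∂ρ)
      = ∫⁻ x, ENNReal.ofReal x ∂ρ := by
    intro ρ
    rw [← lintegral_indicator measurableSet_Ici]
    refine lintegral_congr fun x => ?_
    rcases le_or_gt 0 x with h | h
    · rw [Set.indicator_of_mem (Set.mem_Ici.mpr h)]
    · rw [Set.indicator_of_notMem (by simpa using h), ENNReal.ofReal_eq_zero.mpr h.le]
  have A1 : (∫⁻ u in Set.Iic (0:ℝ), μ (Set.Iic u)) ≠ ⊤ := by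
    rw [tail_neg_aux, ← habs]; exact hμneg.ne
  have A4 : (∫⁻ u in Set.Iic (0:ℝ), ν (Set.Iic u)) = ⊤ := by
    rw [tail_neg_aux, ← habs]; exact hνneg
  have A3 : (∫⁻ u in Set.Ici (0:ℝ), μ (Set.Ioi u)) = ⊤ := by
    rw [tail_pos_aux, ← hpos]; exact hμpos
  have A2 : (∫⁻ u in Set.Ici (0:ℝ), ν (Set.Ioi u)) ≠ ⊤ := by
    rw [tail_pos_aux, ← hpos]; exact hνpos.ne
  -- CDF difference functions
  set dp : ℝ → ℝ≥0∞ := fun u => μ (Set.Iic u) - ν (Set.Iic u) with hdp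
  set dm : ℝ → ℝ≥0∞ := fun u => ν (Set.Iic u) - μ (Set.Iic u) with hdm
  have ma : Measurable fun u : ℝ => μ (Set.Iic u) :=
    Monotone.measurable fun u v huv => measure_mono (Set.Iic_subset_Iic.mpr huv)
  have mb : Measurable fun u : ℝ => ν (Set.Iic u) :=
    Monotone.measurable fun u v huv => measure_mono (Set.Iic_subset_Iic.mpr huv)
  have mdp : Measurable dp := ma.sub mb
  have mdm : Measurable dm := mb.sub ma
  -- ∫ dp < ∞
  have hdple : ∀ u : ℝ, u ∈ Set.Ioi (0:ℝ) → dp u ≤ ν (Set.Ioi u) := by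
    intro u _
    refine tsub_le_iff_right.mpr ?_
    calc μ (Set.Iic u) ≤ 1 := prob_le_one
      _ = ν (Set.Iic u ∪ Set.Ioi u) := by rw [Set.Iic_union_Ioi]; exact measure_univ.symm
      _ ≤ ν (Set.Iic u) + ν (Set.Ioi u) := measure_union_le _ _
      _ = ν (Set.Ioi u) + ν (Set.Iic u) := add_comm _ _
  have hK : (∫⁻ u, dp u) ≠ ⊤ := by
    rw [← lintegral_add_compl (dp) (measurableSet_Iic (a := (0:ℝ))), Set.compl_Iic]
    refine ENNReal.add_ne_top.mpr ⟨?_, ?_⟩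
    · exact (lt_of_le_of_lt (lintegral_mono fun u => tsub_le_self) A1.lt_top).ne
    · refine ((lt_of_le_of_lt (setLIntegral_mono (Antitone.measurable
        (fun u v huv => measure_mono (Set.Ioi_subset_Ioi huv))) hdple) ?_)).ne
      exact lt_of_le_of_lt (lintegral_mono' (Measure.restrict_mono Set.Ioi_subset_Ici_self le_rfl)
        le_rfl) A2.lt_top
  -- ∫ dm = ∞
  have hdmge : ∀ u : ℝ, μ (Set.Ioi u) - ν (Set.Ioi u) ≤ dm u := by
    intro u
    refine tsub_le_iff_right.mpr ?_
    refine ENNReal.le_of_add_le_add_right (measure_ne_top μ (Set.Iic u)) ?_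
    have h1 : μ (Set.Ioi u) + μ (Set.Iic u) = 1 := by
      have h2 := measure_add_measure_compl (μ := μ) (measurableSet_Iic (a := u))
      rw [Set.compl_Iic, measure_univ] at h2
      rw [add_comm]; exact h2
    rw [h1]
    calc (1:ℝ≥0∞) = ν (Set.Iic u ∪ Set.Ioi u) := by
          rw [Set.Iic_union_Ioi]; exact measure_univ.symm
      _ ≤ ν (Set.Iic u) + ν (Set.Ioi u) := measure_union_le _ _
      _ ≤ (dm u + μ (Set.Iic u)) + ν (Set.Ioi u) := by
          gcongr; exact le_tsub_add
      _ = dm u + ν (Set.Ioi u) + μ (Set.Iic u) := add_right_comm _ _ _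
  have hBtop : (∫⁻ u, dm u) = ⊤ := by
    refine top_le_iff.mp ?_
    calc (⊤:ℝ≥0∞) = (∫⁻ u in Set.Ici (0:ℝ), μ (Set.Ioi u))
        - (∫⁻ u in Set.Ici (0:ℝ), ν (Set.Ioi u)) := by
          exact (ENNReal.sub_eq_top_iff.mpr ⟨A3, A2⟩).symm
      _ ≤ ∫⁻ u in Set.Ici (0:ℝ), (μ (Set.Ioi u) - ν (Set.Ioi u)) :=
          lintegral_sub_le _ _ (Antitone.measurable
            (fun u v huv => measure_mono (Set.Ioi_subset_Ioi huv)))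
      _ ≤ ∫⁻ u in Set.Ici (0:ℝ), dm u := setLIntegral_mono mdm fun u _ => hdmge u
      _ ≤ ∫⁻ u, dm u := lintegral_mono' (Measure.restrict_le_self) le_rfl
  -- convolution CDFs
  have hconv : ∀ (ρ : Measure ℝ) [IsProbabilityMeasure ρ], ∀ x : ℝ,
      (ρ.conv η) (Set.Iic x) = ∫⁻ y, ρ (Set.Iic (x - y)) ∂η := by
    intro ρ _ x
    have hadd : Measurable fun p : ℝ × ℝ => p.1 + p.2 := measurable_fst.add measurable_snd
    rw [Measure.conv, Measure.map_apply hadd measurableSet_Iic,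
      Measure.prod_apply_symm (hadd measurableSet_Iic)]
    refine lintegral_congr fun y => ?_
    congr 1
    ext z
    simp [Set.mem_Iic, ← sub_sub, le_sub_iff_add_le]
  -- pointwise identity and comparison
  have key : ∀ x : ℝ, (∫⁻ y, dm (x - y) ∂η) ≤ ∫⁻ y, dp (x - y) ∂η := by
    intro x
    have hid : (μ.conv η) (Set.Iic x) + (∫⁻ y, dm (x - y) ∂η)
        = (ν.conv η) (Set.Iic x) + (∫⁻ y, dp (x - y) ∂η) := by
      have hma' : Measurable fun y : ℝ => μ (Set.Iic (x - y)) :=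
        ma.comp (measurable_const.sub measurable_id)
      have hmb' : Measurable fun y : ℝ => ν (Set.Iic (x - y)) :=
        mb.comp (measurable_const.sub measurable_id)
      rw [hconv μ x, hconv ν x, ← lintegral_add_left hma', ← lintegral_add_left hmb']
      refine lintegral_congr fun y => ?_
      rcases le_total (μ (Set.Iic (x - y))) (ν (Set.Iic (x - y))) with h | h
      · simp only [hdp, hdm]
        rw [add_tsub_cancel_of_le h, tsub_eq_zero_of_le h, add_zero]
      · simp only [hdp, hdm]
        rw [tsub_eq_zero_of_le h, add_zero, add_tsub_cancel_of_le h]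
    have hfin : (μ.conv η) (Set.Iic x) ≠ ⊤ := measure_ne_top _ _
    have := hdom x
    -- from hid and this, conclude
    have h2 : (μ.conv η) (Set.Iic x) + (∫⁻ y, dm (x - y) ∂η)
        ≤ (μ.conv η) (Set.Iic x) + (∫⁻ y, dp (x - y) ∂η) := by
      rw [hid]; exact add_le_add_left (hdom x) _
    exact (ENNReal.add_le_add_iff_left hfin).mp h2
  -- integrate over x and use Tonelli + translation invariance
  have swap : ∀ (g : ℝ → ℝ≥0∞), Measurable g →
      (∫⁻ x, ∫⁻ y, g (x - y) ∂η) = ∫⁻ u, g u := by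
    intro g hg
    calc (∫⁻ x, ∫⁻ y, g (x - y) ∂η)
        = ∫⁻ y, ∫⁻ x, g (x - y) ∂volume ∂η :=
          lintegral_lintegral_swap (hg.comp (measurable_fst.sub measurable_snd)).aemeasurable
      _ = ∫⁻ _, (∫⁻ u, g u) ∂η :=
          lintegral_congr fun y => lintegral_sub_right_eq_self g y
      _ = ∫⁻ u, g u := by simp [lintegral_const]
  have hle : (∫⁻ u, dm u) ≤ ∫⁻ u, dp u := by
    rw [← swap dm mdm, ← swap dp mdp]
    exact lintegral_mono fun x => key x
  rw [hBtop] at hle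
  exact hK (top_le_iff.mp hle)
end

section
/- Assume the following result (Theorem 1 of Pomatto–Strack–Tamuz): for all Borel probability measures μ', ν' on ℝ with finite first moments and E[μ'] < E[ν'], there exists a Borel probability measure η' on ℝ such that μ' * η' ≤ ν' * η' in first-order stochastic dominance. Let μ, ν ∈ P(ℝ) be such that μ has expectation -∞ (i.e., ∫_0^∞ x dμ < ∞ and ∫_{-∞}^0 |x| dμ = ∞) and ν has expectation +∞ (i.e., ∫_{-∞}^0 |x| dν < ∞ and ∫_0^∞ x dν = ∞). Then there exists η ∈ P(ℝ) with μ * η ≤ ν * η. -/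
open MeasureTheory

section Aux

open Measure

lemma conv_Iic_apply (α η : Measure ℝ) [SFinite α] [SFinite η] (x : ℝ) :
    (α.conv η) (Set.Iic x) = ∫⁻ y, α (Set.Iic (x - y)) ∂η := by
  rw [Measure.conv_comm]
  unfold Measure.conv
  rw [Measure.map_apply (by fun_prop) measurableSet_Iic,
    Measure.prod_apply (measurableSet_Iic.preimage (by fun_prop))]
  refine lintegral_congr fun y => ?_
  congr 1
  ext b
  simp [le_sub_iff_add_le']

lemma stochDom_conv_right {α β : Measure ℝ} (η : Measure ℝ) [SFinite α] [SFinite β] [SFinite η]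
    (h : StochDom α β) : StochDom (α.conv η) (β.conv η) := fun x => by
  rw [conv_Iic_apply, conv_Iic_apply]
  exact lintegral_mono fun y => h _

lemma integrable_posPart (μ : Measure ℝ) [IsFiniteMeasure μ]
    (h : (∫⁻ x in Set.Ici (0 : ℝ), ENNReal.ofReal x ∂μ) < ⊤) :
    Integrable (fun x => max x 0) μ := by
  refine ⟨(measurable_id.max measurable_const).aestronglyMeasurable, ?_⟩
  have hnn : 0 ≤ᵐ[μ] fun x : ℝ => max x 0 :=
    Filter.Eventually.of_forall fun x => le_max_right _ _
  rw [hasFiniteIntegral_iff_ofReal hnn]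
  rw [← lintegral_add_compl _ (measurableSet_Ici (a := (0:ℝ)))]
  have h1 : ∫⁻ x in Set.Ici (0:ℝ), ENNReal.ofReal (max x 0) ∂μ
      = ∫⁻ x in Set.Ici (0:ℝ), ENNReal.ofReal x ∂μ := by
    refine setLIntegral_congr_fun measurableSet_Ici (fun x (hx : 0 ≤ x) => ?_)
    simp only [max_eq_left hx]
  have h2 : ∫⁻ x in (Set.Ici (0:ℝ))ᶜ, ENNReal.ofReal (max x 0) ∂μ = 0 := by
    rw [show ((Set.Ici (0:ℝ))ᶜ) = Set.Iio 0 by simp]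
    have : ∀ᵐ x ∂(μ.restrict (Set.Iio 0)), ENNReal.ofReal (max x 0) = 0 := by
      refine (ae_restrict_iff' measurableSet_Iio).mpr (Filter.Eventually.of_forall fun x hx => ?_)
      rw [max_eq_right (le_of_lt hx)]
      simp
    rw [lintegral_congr_ae this, lintegral_zero]
  rw [h1, h2, add_zero]
  exact h

lemma integrable_negPart (ν : Measure ℝ) [IsFiniteMeasure ν]
    (h : (∫⁻ x in Set.Iic (0 : ℝ), ENNReal.ofReal |x| ∂ν) < ⊤) :
    Integrable (fun x => max (-x) 0) ν := by
  refine ⟨(measurable_id.neg.max measurable_const).aestronglyMeasurable, ?_⟩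
  have hnn : 0 ≤ᵐ[ν] fun x : ℝ => max (-x) 0 :=
    Filter.Eventually.of_forall fun x => le_max_right _ _
  rw [hasFiniteIntegral_iff_ofReal hnn]
  rw [← lintegral_add_compl _ (measurableSet_Iic (a := (0:ℝ)))]
  have h1 : ∫⁻ x in Set.Iic (0:ℝ), ENNReal.ofReal (max (-x) 0) ∂ν
      = ∫⁻ x in Set.Iic (0:ℝ), ENNReal.ofReal |x| ∂ν := by
    refine setLIntegral_congr_fun measurableSet_Iic (fun x (hx : x ≤ 0) => ?_)
    simp only [max_eq_left (neg_nonneg.mpr hx), abs_of_nonpos hx]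
  have h2 : ∫⁻ x in (Set.Iic (0:ℝ))ᶜ, ENNReal.ofReal (max (-x) 0) ∂ν = 0 := by
    rw [show ((Set.Iic (0:ℝ))ᶜ) = Set.Ioi 0 by simp]
    have : ∀ᵐ x ∂(ν.restrict (Set.Ioi 0)), ENNReal.ofReal (max (-x) 0) = 0 := by
      refine (ae_restrict_iff' measurableSet_Ioi).mpr (Filter.Eventually.of_forall fun x hx => ?_)
      rw [max_eq_right (by linarith [Set.mem_Ioi.mp hx])]
      simp
    rw [lintegral_congr_ae this, lintegral_zero]
  rw [h1, h2, add_zero]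
  exact h

lemma exists_trunc_gt (μ : Measure ℝ) [IsProbabilityMeasure μ]
    (g : ℝ → ℝ) (hg : Measurable g) (hg0 : ∀ x, 0 ≤ g x)
    (hdiv : ∫⁻ x, ENNReal.ofReal (g x) ∂μ = ⊤) (c : ℝ) :
    ∃ n : ℕ, c < ∫ x, min (g x) n ∂μ := by
  have hsup : (⨆ n : ℕ, ∫⁻ x, ENNReal.ofReal (min (g x) n) ∂μ) = ⊤ := by
    rw [← lintegral_iSup (fun n : ℕ => (hg.min measurable_const).ennreal_ofReal)
      (fun i j hij x => ENNReal.ofReal_le_ofReal (min_le_min le_rfl (Nat.cast_le.mpr hij)))]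
    rw [← hdiv]
    refine lintegral_congr fun x => ?_
    refine le_antisymm (iSup_le fun n => ENNReal.ofReal_le_ofReal (min_le_left _ _)) ?_
    obtain ⟨n, hn⟩ := exists_nat_ge (g x)
    exact le_iSup_of_le n (by rw [min_eq_left hn])
  have : (ENNReal.ofReal c) < ⨆ n : ℕ, ∫⁻ x, ENNReal.ofReal (min (g x) n) ∂μ := by
    rw [hsup]; exact ENNReal.ofReal_lt_top
  obtain ⟨n, hn⟩ := lt_iSup_iff.mp this
  refine ⟨n, ?_⟩
  have hnonneg : 0 ≤ᵐ[μ] fun x => min (g x) (n : ℝ) :=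
    Filter.Eventually.of_forall fun x => le_min (hg0 x) (Nat.cast_nonneg n)
  have hint : ∫ x, min (g x) n ∂μ
      = (∫⁻ x, ENNReal.ofReal (min (g x) n) ∂μ).toReal :=
    integral_eq_lintegral_of_nonneg_ae hnonneg
      (hg.min measurable_const).aestronglyMeasurable
  have hne : (∫⁻ x, ENNReal.ofReal (min (g x) n) ∂μ) ≠ ⊤ := by
    refine ne_of_lt (lt_of_le_of_lt ?_ (show ENNReal.ofReal n < ⊤ from ENNReal.ofReal_lt_top))
    calc (∫⁻ x, ENNReal.ofReal (min (g x) n) ∂μ)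
        ≤ ∫⁻ _, ENNReal.ofReal n ∂μ :=
          lintegral_mono fun x => ENNReal.ofReal_le_ofReal (min_le_right _ _)
      _ = ENNReal.ofReal n := by simp
  rcases lt_or_ge c 0 with hc | hc
  · exact lt_of_lt_of_le hc (integral_nonneg fun x => le_min (hg0 x) (Nat.cast_nonneg n))
  · rw [hint]
    exact (ENNReal.ofReal_lt_iff_lt_toReal hc hne).mp hn

lemma max_neg_eq (x T : ℝ) (hT : 0 ≤ T) : max x (-T) = max x 0 - min (max (-x) 0) T := by
  rcases le_total x 0 with h | h
  · rcases le_total (-x) T with h' | h'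
    · rw [max_eq_right h, max_eq_left (neg_nonneg.mpr h), min_eq_left h',
        max_eq_left (by linarith)]
      ring
    · rw [max_eq_right h, max_eq_left (neg_nonneg.mpr h), min_eq_right h',
        max_eq_right (by linarith)]
      ring
  · rw [max_eq_left h, max_eq_right (neg_nonpos.mpr h), min_eq_left hT,
      max_eq_left (by linarith)]
    ring

lemma min_eq' (x T : ℝ) (hT : 0 ≤ T) : min x T = min (max x 0) T - max (-x) 0 := by
  rcases le_total x 0 with h | h
  · rw [max_eq_right h, max_eq_left (neg_nonneg.mpr h), min_eq_left hT,
      min_eq_left (le_trans h hT)]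
    ring
  · rw [max_eq_left h, max_eq_right (neg_nonpos.mpr h)]
    ring

lemma integrable_min_const (μ : Measure ℝ) [IsProbabilityMeasure μ]
    (g : ℝ → ℝ) (hg : Measurable g) (hg0 : ∀ x, 0 ≤ g x) (T : ℝ) (hT : 0 ≤ T) :
    Integrable (fun x => min (g x) T) μ := by
  refine Integrable.mono' (integrable_const T) (hg.min measurable_const).aestronglyMeasurable
    (Filter.Eventually.of_forall fun x => ?_)
  rw [Real.norm_eq_abs, abs_of_nonneg (le_min (hg0 x) hT)]
  exact min_le_right _ _

end Aux

theorem exists_eta_of_minus_plus_infinity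
    (PST : ∀ μ' ν' : Measure ℝ, IsProbabilityMeasure μ' → IsProbabilityMeasure ν' →
      Integrable (fun x : ℝ => x) μ' → Integrable (fun x : ℝ => x) ν' →
      (∫ x, x ∂μ') < (∫ x, x ∂ν') →
      ∃ η' : Measure ℝ, IsProbabilityMeasure η' ∧ StochDom (μ'.conv η') (ν'.conv η'))
    (μ ν : Measure ℝ) [IsProbabilityMeasure μ] [IsProbabilityMeasure ν]
    (hμpos : (∫⁻ x in Set.Ici (0 : ℝ), ENNReal.ofReal x ∂μ) < ⊤)
    (hμneg : (∫⁻ x in Set.Iic (0 : ℝ), ENNReal.ofReal |x| ∂μ) = ⊤)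
    (hνneg : (∫⁻ x in Set.Iic (0 : ℝ), ENNReal.ofReal |x| ∂ν) < ⊤)
    (hνpos : (∫⁻ x in Set.Ici (0 : ℝ), ENNReal.ofReal x ∂ν) = ⊤) :
    ∃ η : Measure ℝ, IsProbabilityMeasure η ∧ StochDom (μ.conv η) (ν.conv η) := by
  -- integrable parts
  have hμposInt : Integrable (fun x => max x 0) μ := integrable_posPart μ hμpos
  have hνnegInt : Integrable (fun x => max (-x) 0) ν := integrable_negPart ν hνneg
  -- divergent parts
  have hμdiv : ∫⁻ x, ENNReal.ofReal (max (-x) 0) ∂μ = ⊤ := by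
    refine top_unique ?_
    calc (⊤ : ENNReal) = ∫⁻ x in Set.Iic (0:ℝ), ENNReal.ofReal |x| ∂μ := hμneg.symm
      _ = ∫⁻ x in Set.Iic (0:ℝ), ENNReal.ofReal (max (-x) 0) ∂μ := by
          refine setLIntegral_congr_fun measurableSet_Iic
            (fun x (hx : x ≤ 0) => ?_)
          simp only [max_eq_left (neg_nonneg.mpr hx), abs_of_nonpos hx]
      _ ≤ ∫⁻ x, ENNReal.ofReal (max (-x) 0) ∂μ := setLIntegral_le_lintegral _ _
  have hνdiv : ∫⁻ x, ENNReal.ofReal (max x 0) ∂ν = ⊤ := by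
    refine top_unique ?_
    calc (⊤ : ENNReal) = ∫⁻ x in Set.Ici (0:ℝ), ENNReal.ofReal x ∂ν := hνpos.symm
      _ = ∫⁻ x in Set.Ici (0:ℝ), ENNReal.ofReal (max x 0) ∂ν := by
          refine setLIntegral_congr_fun measurableSet_Ici
            (fun x (hx : 0 ≤ x) => ?_)
          simp only [max_eq_left hx]
      _ ≤ ∫⁻ x, ENNReal.ofReal (max x 0) ∂ν := setLIntegral_le_lintegral _ _
  -- choose truncation levels
  obtain ⟨n, hn⟩ := exists_trunc_gt μ (fun x => max (-x) 0)
    (measurable_id.neg.max measurable_const) (fun x => le_max_right _ _) hμdiv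
    (∫ x, max x 0 ∂μ)
  obtain ⟨m, hm⟩ := exists_trunc_gt ν (fun x => max x 0)
    (measurable_id.max measurable_const) (fun x => le_max_right _ _) hνdiv
    (∫ x, max (-x) 0 ∂ν)
  set T : ℝ := max n m with hTdef
  have hT0 : 0 ≤ T := le_trans (Nat.cast_nonneg n) (le_max_left _ _)
  have hTn : (n : ℝ) ≤ T := le_max_left _ _
  have hTm : (m : ℝ) ≤ T := le_max_right _ _
  -- integrability of the truncated integrands
  have hμminInt : Integrable (fun x => min (max (-x) 0) T) μ :=
    integrable_min_const μ _ (measurable_id.neg.max measurable_const)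
      (fun x => le_max_right _ _) T hT0
  have hνminInt : Integrable (fun x => min (max x 0) T) ν :=
    integrable_min_const ν _ (measurable_id.max measurable_const)
      (fun x => le_max_right _ _) T hT0
  have hμnInt : Integrable (fun x => min (max (-x) 0) (n:ℝ)) μ :=
    integrable_min_const μ _ (measurable_id.neg.max measurable_const)
      (fun x => le_max_right _ _) n (Nat.cast_nonneg n)
  have hνmInt : Integrable (fun x => min (max x 0) (m:ℝ)) ν :=
    integrable_min_const ν _ (measurable_id.max measurable_const)
      (fun x => le_max_right _ _) m (Nat.cast_nonneg m)
  have hμTrInt : Integrable (fun x => max x (-T)) μ := by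
    have : (fun x : ℝ => max x (-T)) = fun x => max x 0 - min (max (-x) 0) T :=
      funext fun x => max_neg_eq x T hT0
    rw [this]
    exact hμposInt.sub hμminInt
  have hνTrInt : Integrable (fun x => min x T) ν := by
    have : (fun x : ℝ => min x T) = fun x => min (max x 0) T - max (-x) 0 :=
      funext fun x => min_eq' x T hT0
    rw [this]
    exact hνminInt.sub hνnegInt
  -- expectations of the truncations
  have hEμ : ∫ x, max x (-T) ∂μ < 0 := by
    have heq : ∫ x, max x (-T) ∂μ = ∫ x, max x 0 ∂μ - ∫ x, min (max (-x) 0) T ∂μ := by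
      rw [← integral_sub hμposInt hμminInt]
      exact integral_congr_ae (Filter.Eventually.of_forall fun x => max_neg_eq x T hT0)
    have hmono : ∫ x, min (max (-x) 0) (n:ℝ) ∂μ ≤ ∫ x, min (max (-x) 0) T ∂μ :=
      integral_mono hμnInt hμminInt fun x => min_le_min le_rfl hTn
    rw [heq]
    linarith
  have hEν : 0 < ∫ x, min x T ∂ν := by
    have heq : ∫ x, min x T ∂ν = ∫ x, min (max x 0) T ∂ν - ∫ x, max (-x) 0 ∂ν := by
      rw [← integral_sub hνminInt hνnegInt]
      exact integral_congr_ae (Filter.Eventually.of_forall fun x => min_eq' x T hT0)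
    have hmono : ∫ x, min (max x 0) (m:ℝ) ∂ν ≤ ∫ x, min (max x 0) T ∂ν :=
      integral_mono hνmInt hνminInt fun x => min_le_min le_rfl hTm
    rw [heq]
    linarith
  -- truncated measures
  set μT : Measure ℝ := μ.map (fun x => max x (-T)) with hμT
  set νT : Measure ℝ := ν.map (fun x => min x T) with hνT
  have hmeasμf : Measurable (fun x : ℝ => max x (-T)) := measurable_id.max measurable_const
  have hmeasνf : Measurable (fun x : ℝ => min x T) := measurable_id.min measurable_const
  haveI : IsProbabilityMeasure μT := Measure.isProbabilityMeasure_map hmeasμf.aemeasurable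
  haveI : IsProbabilityMeasure νT := Measure.isProbabilityMeasure_map hmeasνf.aemeasurable
  have hμTint : Integrable (fun x : ℝ => x) μT := by
    rw [hμT, integrable_map_measure (g := fun x : ℝ => x) aestronglyMeasurable_id hmeasμf.aemeasurable]
    exact hμTrInt
  have hνTint : Integrable (fun x : ℝ => x) νT := by
    rw [hνT, integrable_map_measure (g := fun x : ℝ => x) aestronglyMeasurable_id hmeasνf.aemeasurable]
    exact hνTrInt
  have hEμT : ∫ x, x ∂μT = ∫ x, max x (-T) ∂μ :=
    integral_map (f := fun x : ℝ => x) hmeasμf.aemeasurable aestronglyMeasurable_id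
  have hEνT : ∫ x, x ∂νT = ∫ x, min x T ∂ν :=
    integral_map (f := fun x : ℝ => x) hmeasνf.aemeasurable aestronglyMeasurable_id
  have hlt : ∫ x, x ∂μT < ∫ x, x ∂νT := by
    rw [hEμT, hEνT]; linarith
  obtain ⟨η, hη, hdom⟩ := PST μT νT inferInstance inferInstance hμTint hνTint hlt
  haveI := hη
  refine ⟨η, hη, ?_⟩
  have d1 : StochDom μ μT := fun x => by
    rw [hμT, Measure.map_apply hmeasμf measurableSet_Iic]
    exact measure_mono fun a ha => Set.mem_Iic.mpr (le_trans (le_max_left a (-T)) (Set.mem_Iic.mp ha))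
  have d2 : StochDom νT ν := fun x => by
    rw [hνT, Measure.map_apply hmeasνf measurableSet_Iic]
    exact measure_mono fun a ha => Set.mem_preimage.mpr (Set.mem_Iic.mpr (le_trans (min_le_left a T) (Set.mem_Iic.mp ha)))
  intro x
  calc ν.conv η (Set.Iic x) ≤ νT.conv η (Set.Iic x) := stochDom_conv_right η d2 x
    _ ≤ μT.conv η (Set.Iic x) := hdom x
    _ ≤ μ.conv η (Set.Iic x) := stochDom_conv_right η d1 x
end

section
/- Let ν ∈ P(ℝ) be non-atomic (ν({x}) = 0 for every x ∈ ℝ) and let μ ∈ P(ℝ). Then μ ≤ ν in first-order stochastic dominance if and only if there exists a Borel measurable function π : ℝ → ℝ with π(x) ≤ x for all x ∈ ℝ such that π_*ν = μ. -/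
open MeasureTheory Set Filter Topology
open scoped ENNReal

section Aux

variable (ν : Measure ℝ)

lemma monoF : Monotone (fun x : ℝ => ν (Set.Iic x)) :=
  fun _ _ hab => measure_mono (Set.Iic_subset_Iic.2 hab)

lemma measF : Measurable (fun x : ℝ => ν (Set.Iic x)) :=
  (monoF ν).measurable

lemma iUnion_Iic_sub (a : ℝ) : (⋃ n : ℕ, Set.Iic (a - 1/(n+1))) = Set.Iio a := by
  ext x
  simp only [Set.mem_iUnion, Set.mem_Iic, Set.mem_Iio]
  constructor
  · rintro ⟨n, hn⟩
    have : (0:ℝ) < 1/(n+1) := by positivity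
    linarith
  · intro hx
    obtain ⟨n, hn⟩ := exists_nat_one_div_lt (show (0:ℝ) < a - x by linarith)
    exact ⟨n, by linarith⟩

lemma iInter_Iic_add (a : ℝ) : (⋂ n : ℕ, Set.Iic (a + 1/(n+1))) = Set.Iic a := by
  ext x
  simp only [Set.mem_iInter, Set.mem_Iic]
  constructor
  · intro hx
    by_contra hxa
    push_neg at hxa
    obtain ⟨n, hn⟩ := exists_nat_one_div_lt (show (0:ℝ) < x - a by linarith)
    have := hx n
    linarith
  · intro hx n
    have : (0:ℝ) < 1/(n+1) := by positivity
    linarith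

lemma one_div_anti : ∀ {n m : ℕ}, n ≤ m → (1:ℝ)/(m+1) ≤ 1/(n+1) := by
  intro n m h
  have hn : (0:ℝ) < n + 1 := by positivity
  apply one_div_le_one_div_of_le hn
  exact_mod_cast Nat.succ_le_succ h

variable [IsProbabilityMeasure ν]

lemma tendsto_F_atBot : Tendsto (fun x : ℝ => ν (Set.Iic x)) atBot (𝓝 0) := by
  have h := tendsto_measure_iInter_atBot (μ := ν) (s := fun x : ℝ => Set.Iic x)
    (fun _ => measurableSet_Iic.nullMeasurableSet)
    (fun a b hab => Set.Iic_subset_Iic.2 hab) ⟨0, measure_ne_top _ _⟩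
  have he : (⋂ x : ℝ, Set.Iic x) = ∅ := by
    ext x
    simp only [Set.mem_iInter, Set.mem_Iic, Set.mem_empty_iff_false, iff_false, not_forall]
    exact ⟨x - 1, by push_neg; linarith⟩
  rwa [he, measure_empty] at h

lemma tendsto_F_atTop : Tendsto (fun x : ℝ => ν (Set.Iic x)) atTop (𝓝 1) := by
  have h := tendsto_measure_Iic_atTop (μ := ν)
  rwa [measure_univ] at h

/-- right continuity of the CDF as a limit along a sequence -/
lemma tendsto_F_right (t : ℝ) :
    Tendsto (fun n : ℕ => ν (Set.Iic (t + 1/(n+1)))) atTop (𝓝 (ν (Set.Iic t))) := by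
  have h := tendsto_measure_iInter_atTop (μ := ν) (s := fun n : ℕ => Set.Iic (t + 1/(n+1)))
    (fun _ => measurableSet_Iic.nullMeasurableSet)
    (fun n m hnm => Set.Iic_subset_Iic.2 (by linarith [one_div_anti hnm]))
    ⟨0, measure_ne_top _ _⟩
  rwa [iInter_Iic_add] at h

lemma tendsto_F_left (a : ℝ) :
    Tendsto (fun n : ℕ => ν (Set.Iic (a - 1/(n+1)))) atTop (𝓝 (ν (Set.Iio a))) := by
  have h := tendsto_measure_iUnion_atTop (μ := ν) (s := fun n : ℕ => Set.Iic (a - 1/(n+1)))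
    (fun n m hnm => Set.Iic_subset_Iic.2 (by linarith [one_div_anti hnm]))
  rwa [iUnion_Iic_sub] at h

/-- The probability integral transform identity : for a non-atomic probability
measure `ν` and `c ≤ 1`, the set where the CDF is at most `c` has measure `c`. -/
lemma key (hν : ∀ x : ℝ, ν {x} = 0) (c : ℝ≥0∞) (hc : c ≤ 1) :
    ν {x : ℝ | ν (Set.Iic x) ≤ c} = c := by
  set F : ℝ → ℝ≥0∞ := fun x => ν (Set.Iic x) with hF
  set B : Set ℝ := {x : ℝ | F x ≤ c} with hB
  rcases B.eq_empty_or_nonempty with hne | hne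
  · have h0 : c = 0 := by
      refine le_antisymm ?_ zero_le
      refine ge_of_tendsto (tendsto_F_atBot ν) (Eventually.of_forall fun x => ?_)
      have hx : x ∉ B := by rw [hne]; exact Set.notMem_empty x
      have hx' : ¬ ν (Set.Iic x) ≤ c := by simpa [hB] using hx
      exact le_of_lt (lt_of_not_ge hx')
    rw [hne, measure_empty, h0]
  by_cases hbdd : BddAbove B
  · set a := sSup B with ha
    have hIio : Set.Iio a ⊆ B := by
      intro x hx
      obtain ⟨s, hs, hxs⟩ := exists_lt_of_lt_csSup hne hx
      exact le_trans (monoF ν hxs.le) hs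
    have hBIic : B ⊆ Set.Iic a := fun x hx => le_csSup hbdd hx
    have h1 : ν (Set.Iio a) = ν (Set.Iic a) := measure_congr (Iio_ae_eq_Iic' (hν a))
    have hνB : ν B = F a := by
      refine le_antisymm (measure_mono hBIic) ?_
      show ν (Set.Iic a) ≤ ν B
      rw [← h1]
      exact measure_mono hIio
    have hle : F a ≤ c := by
      show ν (Set.Iic a) ≤ c
      rw [← h1]
      refine le_of_tendsto (tendsto_F_left ν a) (Eventually.of_forall fun n => ?_)
      refine hIio ?_
      have : (0:ℝ) < 1/(n+1) := by positivity
      simp only [Set.mem_Iio]; linarith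
    have hge : c ≤ F a := by
      show c ≤ ν (Set.Iic a)
      refine ge_of_tendsto (tendsto_F_right ν a) (Eventually.of_forall fun n => ?_)
      have hpos : (0:ℝ) < 1/(n+1) := by positivity
      have hnot : a + 1/(n+1) ∉ B := by
        intro hmem
        have := hBIic hmem
        simp only [Set.mem_Iic] at this
        linarith
      exact le_of_lt (lt_of_not_ge hnot)
    rw [hνB, le_antisymm hle hge]
  · have hBuniv : B = Set.univ := by
      rw [not_bddAbove_iff] at hbdd
      refine Set.eq_univ_of_forall fun x => ?_
      obtain ⟨y, hy, hxy⟩ := hbdd x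
      exact le_trans (monoF ν hxy.le) hy
    have h1c : (1:ℝ≥0∞) ≤ c := by
      refine le_of_tendsto (tendsto_F_atTop ν) (Eventually.of_forall fun x => ?_)
      have : x ∈ B := hBuniv ▸ Set.mem_univ x
      exact this
    rw [hBuniv, measure_univ, le_antisymm hc h1c]

end Aux

theorem stochDom_iff_pushforward
    (μ ν : Measure ℝ) [IsProbabilityMeasure μ] [IsProbabilityMeasure ν]
    (hν : ∀ x : ℝ, ν {x} = 0) :
    StochDom μ ν ↔
      ∃ π : ℝ → ℝ, Measurable π ∧ (∀ x : ℝ, π x ≤ x) ∧ ν.map π = μ := by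
  constructor
  · intro h
    set F : ℝ → ℝ≥0∞ := fun x => ν (Set.Iic x) with hF
    set G : ℝ → ℝ≥0∞ := fun t => μ (Set.Iic t) with hG
    set S : ℝ → Set ℝ := fun x => {y : ℝ | y ≤ x ∧ F x ≤ G y} with hS
    set π : ℝ → ℝ := fun x => if F x = 0 then x else sInf (S x) with hπ
    have hxS : ∀ x : ℝ, x ∈ S x := fun x => ⟨le_rfl, h x⟩
    have hbdd : ∀ x : ℝ, F x ≠ 0 → BddBelow (S x) := by
      intro x hx
      have hpos : (0:ℝ≥0∞) < F x := pos_iff_ne_zero.2 hx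
      obtain ⟨y₀, hy₀⟩ := ((tendsto_F_atBot μ).eventually_lt_const hpos).exists
      refine ⟨y₀, fun y hy => ?_⟩
      by_contra hyy
      push_neg at hyy
      exact absurd (le_trans hy.2 (monoF μ hyy.le)) (not_le.2 hy₀)
    have hπle : ∀ x : ℝ, π x ≤ x := by
      intro x
      rw [hπ]
      by_cases hx : F x = 0
      · simp [hx]
      · simp only [hx, if_false]
        exact csInf_le (hbdd x hx) (hxS x)
    have hkey : ∀ t x : ℝ, F x ≠ 0 → (sInf (S x) ≤ t ↔ F x ≤ G t) := by
      intro t x hx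
      constructor
      · intro hinf
        refine ge_of_tendsto (tendsto_F_right μ t) (Eventually.of_forall fun n => ?_)
        have hpos : (0:ℝ) < 1/(n+1) := by positivity
        obtain ⟨y, hyS, hyt⟩ := exists_lt_of_csInf_lt ⟨x, hxS x⟩
          (show sInf (S x) < t + 1/(n+1) by linarith)
        exact le_trans hyS.2 (monoF μ hyt.le)
      · intro hFG
        by_cases htx : t ≤ x
        · exact csInf_le (hbdd x hx) ⟨htx, hFG⟩
        · push_neg at htx
          exact le_trans (le_trans (csInf_le (hbdd x hx) (hxS x)) le_rfl) htx.le
    have hpre : ∀ t : ℝ, π ⁻¹' (Set.Iic t) =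
        ({x : ℝ | F x = 0} ∩ Set.Iic t) ∪ ({x : ℝ | F x = 0}ᶜ ∩ {x : ℝ | F x ≤ G t}) := by
      intro t
      ext x
      simp only [Set.mem_preimage, Set.mem_Iic, Set.mem_union, Set.mem_inter_iff,
        Set.mem_setOf_eq, Set.mem_compl_iff]
      by_cases hx : F x = 0
      · simp [hπ, hx]
      · simp only [hπ, hx, if_false, not_false_iff, false_and, false_or, true_and]
        exact hkey t x hx
    have hFmeas : Measurable F := measF ν
    have hmeas0 : MeasurableSet {x : ℝ | F x = 0} := hFmeas (measurableSet_singleton 0)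
    have hπmeas : Measurable π := by
      refine measurable_of_Iic fun t => ?_
      rw [hpre t]
      exact (hmeas0.inter measurableSet_Iic).union
        (hmeas0.compl.inter (hFmeas measurableSet_Iic))
    have hnull : ν {x : ℝ | F x = 0} = 0 := by
      have h0 := key ν hν 0 zero_le
      have : {x : ℝ | ν (Set.Iic x) ≤ 0} = {x : ℝ | F x = 0} := by
        ext x; simp [hF, le_zero_iff]
      rwa [this] at h0
    refine ⟨π, hπmeas, hπle, ?_⟩
    have : IsProbabilityMeasure (ν.map π) := Measure.isProbabilityMeasure_map hπmeas.aemeasurable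
    refine Measure.ext_of_Iic (ν.map π) μ fun t => ?_
    rw [Measure.map_apply hπmeas measurableSet_Iic, hpre t]
    have hA : ν ({x : ℝ | F x = 0} ∩ Set.Iic t) = 0 :=
      measure_mono_null Set.inter_subset_left hnull
    have hunion : ν (({x : ℝ | F x = 0} ∩ Set.Iic t) ∪
        ({x : ℝ | F x = 0}ᶜ ∩ {x : ℝ | F x ≤ G t})) =
        ν ({x : ℝ | F x = 0}ᶜ ∩ {x : ℝ | F x ≤ G t}) := by
      refine le_antisymm ?_ (measure_mono Set.subset_union_right)
      calc ν _ ≤ ν ({x : ℝ | F x = 0} ∩ Set.Iic t) +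
          ν ({x : ℝ | F x = 0}ᶜ ∩ {x : ℝ | F x ≤ G t}) := measure_union_le _ _
        _ = ν ({x : ℝ | F x = 0}ᶜ ∩ {x : ℝ | F x ≤ G t}) := by rw [hA, zero_add]
    rw [hunion]
    have hdiff : {x : ℝ | F x = 0}ᶜ ∩ {x : ℝ | F x ≤ G t} =
        {x : ℝ | F x ≤ G t} \ {x : ℝ | F x = 0} := by
      ext x; simp [Set.mem_diff, and_comm]
    rw [hdiff, measure_diff_null hnull]
    exact key ν hν (G t) prob_le_one
  · rintro ⟨π, hπ, hle, hmap⟩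
    intro x
    rw [← hmap, Measure.map_apply hπ measurableSet_Iic]
    exact measure_mono fun y hy => le_trans (hle y) hy
end
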